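/- In the smooth RCSN setting, suppose φ is bounded below on E. Then: (1) φ(x_{k+1}) < φ(x_k) for every k, and the sequence (φ(x_k)) converges; and (2) if some subsequence (x_{k_j}) converges to a point x̄, then ∇φ(x̄) = 0 and φ(x̄) = inf_{k∈ℕ} φ(x_k). -/

import Mathlib

open scoped RealInnerProductSpace
open Filter Topology

set_option maxHeartbeats 1000000 in
theorem rcsn_descent_and_stationarity
    {E : Type*} [NormedAddCommGroup E] [InnerProductSpace ℝ E] [FiniteDimensional ℝ E]
    (g h : E → ℝ) (hg : ContDiff ℝ 2 g) (hh : Differentiable ℝ h)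
    (hhl : LocallyLipschitz (gradient h))
    (φ : E → ℝ) (hφ : ∀ y, φ y = g y - h y)
    (σ β ζ tmin ρmax : ℝ)
    (hσ : σ ∈ Set.Ioo (0 : ℝ) 1) (hβ : β ∈ Set.Ioo (0 : ℝ) 1)
    (hζ : 0 < ζ) (htmin : 0 < tmin) (hρmax : 0 ≤ ρmax)
    (x d : ℕ → E) (τ ρ : ℕ → ℝ)
    (hwne : ∀ k, gradient φ (x k) ≠ 0)
    (hρk : ∀ k, ρ k ∈ Set.Icc 0 ρmax)
    (hdne : ∀ k, d k ≠ 0)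
    (hdir : ∀ k, fderiv ℝ (gradient g) (x k) (d k) + ρ k • d k = -(gradient φ (x k)))
    (hdesc : ∀ k, ⟪gradient φ (x k), d k⟫ ≤ -ζ * ‖d k‖ ^ 2)
    (hτpos : ∀ k, 0 < τ k)
    (hls : ∀ k, φ (x k + τ k • d k) ≤ φ (x k) + σ * τ k * ⟪gradient φ (x k), d k⟫)
    (hbt : ∀ k, tmin ≤ τ k ∨
      φ (x k) + σ * (τ k / β) * ⟪gradient φ (x k), d k⟫ < φ (x k + (τ k / β) • d k))
    (hupd : ∀ k, x (k + 1) = x k + τ k • d k)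
    (hbdd : BddBelow (Set.range φ))
    :
    (∀ k, φ (x (k + 1)) < φ (x k)) ∧
    (∃ L : ℝ, Tendsto (fun k => φ (x k)) atTop (𝓝 L)) ∧
    (∀ s : ℕ → ℕ, StrictMono s → ∀ xb : E,
      Tendsto (fun j => x (s j)) atTop (𝓝 xb) →
        gradient φ xb = 0 ∧ φ xb = ⨅ k, φ (x k)) := by
  obtain ⟨hσ0, hσ1⟩ := hσ
  obtain ⟨hβ0, hβ1⟩ := hβ
  have hφfun : φ = fun y => g y - h y := funext hφ
  have hgd : Differentiable ℝ g := hg.differentiable (by norm_num)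
  have hφd : Differentiable ℝ φ := by rw [hφfun]; exact hgd.sub hh
  have hφc : Continuous φ := hφd.continuous
  have hdpos : ∀ k, 0 < ‖d k‖ := fun k => norm_pos_iff.mpr (hdne k)
  have key : ∀ k, σ * ζ * (τ k * ‖d k‖ ^ 2) ≤ φ (x k) - φ (x (k + 1)) := by
    intro k
    have h1 := hls k
    have h2 := hdesc k
    have h3 := hτpos k
    rw [hupd k]
    nlinarith [mul_pos hσ0 h3]
  have part1 : ∀ k, φ (x (k + 1)) < φ (x k) := by
    intro k
    have := key k
    nlinarith [mul_pos (mul_pos hσ0 hζ) (mul_pos (hτpos k) (pow_pos (hdpos k) 2))]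
  have hanti : Antitone fun k => φ (x k) := antitone_nat_of_succ_le fun k => (part1 k).le
  have hbdd' : BddBelow (Set.range fun k => φ (x k)) :=
    hbdd.mono (Set.range_comp_subset_range x φ)
  set L := ⨅ k, φ (x k) with hL
  have hTend : Tendsto (fun k => φ (x k)) atTop (𝓝 L) := tendsto_atTop_ciInf hanti hbdd'
  refine ⟨part1, ⟨L, hTend⟩, ?_⟩
  intro s hs xb hxs
  -- τ k * ‖d k‖² → 0
  have hTd : Tendsto (fun k => τ k * ‖d k‖ ^ 2) atTop (𝓝 0) := by
    have h1 : Tendsto (fun k => φ (x k) - φ (x (k + 1))) atTop (𝓝 0) := by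
      have := hTend.sub (hTend.comp (tendsto_add_atTop_nat 1))
      simpa using this
    have hnn : ∀ k, 0 ≤ τ k * ‖d k‖ ^ 2 :=
      fun k => le_of_lt (mul_pos (hτpos k) (pow_pos (hdpos k) 2))
    have hub : ∀ k, τ k * ‖d k‖ ^ 2 ≤ (φ (x k) - φ (x (k + 1))) / (σ * ζ) := by
      intro k
      rw [le_div_iff₀ (mul_pos hσ0 hζ)]
      nlinarith [key k]
    have h2 : Tendsto (fun k => (φ (x k) - φ (x (k + 1))) / (σ * ζ)) atTop (𝓝 0) := by
      simpa using h1.div_const (σ * ζ)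
    exact squeeze_zero hnn hub h2
  -- gradient machinery
  have hdual : IsBoundedLinearMap ℝ
      fun f : StrongDual ℝ E => (InnerProductSpace.toDual ℝ E).symm f := by
    refine ⟨⟨fun a b => map_add _ a b, fun c a => ?_⟩, 1, one_pos, fun a => by simp⟩
    simp
  have hGg : gradient g = fun y => (InnerProductSpace.toDual ℝ E).symm (fderiv ℝ g y) := rfl
  have hg1 : ContDiff ℝ 1 (gradient g) := by
    rw [hGg]
    exact hdual.contDiff.comp (hg.fderiv_right (by norm_num))
  have hHc : Continuous fun y => fderiv ℝ (gradient g) y := hg1.continuous_fderiv (by norm_num)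
  have hGgc : Continuous (gradient g) := hg1.continuous
  have hGhc : Continuous (gradient h) := hhl.continuous
  have gradφ : ∀ y, gradient φ y = gradient g y - gradient h y := by
    intro y
    have h1 : HasFDerivAt g (InnerProductSpace.toDual ℝ E (gradient g y)) y :=
      (hgd y).hasGradientAt.hasFDerivAt
    have h2 : HasFDerivAt h (InnerProductSpace.toDual ℝ E (gradient h y)) y :=
      (hh y).hasGradientAt.hasFDerivAt
    have h3 : HasGradientAt φ (gradient g y - gradient h y) y := by
      rw [hasGradientAt_iff_hasFDerivAt, map_sub]
      exact hφfun ▸ h1.sub h2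
    exact h3.gradient
  have hGφc : Continuous (gradient φ) := by
    have : gradient φ = fun y => gradient g y - gradient h y := funext gradφ
    rw [this]; exact hGgc.sub hGhc
  have hfdφ : ∀ z, fderiv ℝ φ z = InnerProductSpace.toDual ℝ E (gradient φ z) := by
    intro z
    rw [show gradient φ z = (InnerProductSpace.toDual ℝ E).symm (fderiv ℝ φ z) from rfl,
      LinearIsometryEquiv.apply_symm_apply]
  -- φ xb = L
  have hxφ : Tendsto (fun j => φ (x (s j))) atTop (𝓝 (φ xb)) := (hφc.tendsto xb).comp hxs
  have hxφ' : Tendsto (fun j => φ (x (s j))) atTop (𝓝 L) := hTend.comp hs.tendsto_atTop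
  have hφxb : φ xb = L := tendsto_nhds_unique hxφ hxφ'
  refine ⟨?_, hφxb⟩
  -- local Lipschitz bound for gradient φ near xb
  obtain ⟨K1, t1, ht1, hK1⟩ := hg1.contDiffAt.exists_lipschitzOnWith
  obtain ⟨K2, t2, ht2, hK2⟩ := hhl xb
  obtain ⟨r, hr0, hrsub⟩ := Metric.nhds_basis_closedBall.mem_iff.mp (Filter.inter_mem ht1 ht2)
  set M : ℝ := K1 + K2 + 1 with hM
  have hM0 : 0 < M := by positivity
  have hLip : ∀ y ∈ Metric.closedBall xb r, ∀ z ∈ Metric.closedBall xb r,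
      ‖gradient φ y - gradient φ z‖ ≤ M * ‖y - z‖ := by
    intro y hy z hz
    have e1 : dist (gradient g y) (gradient g z) ≤ K1 * dist y z :=
      hK1.dist_le_mul y (hrsub hy).1 z (hrsub hz).1
    have e2 : dist (gradient h y) (gradient h z) ≤ K2 * dist y z :=
      hK2.dist_le_mul y (hrsub hy).2 z (hrsub hz).2
    rw [dist_eq_norm, dist_eq_norm] at e1 e2
    have e3 : gradient φ y - gradient φ z =
        (gradient g y - gradient g z) - (gradient h y - gradient h z) := by
      rw [gradφ, gradφ]; abel
    rw [e3]
    calc ‖(gradient g y - gradient g z) - (gradient h y - gradient h z)‖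
        ≤ ‖gradient g y - gradient g z‖ + ‖gradient h y - gradient h z‖ := norm_sub_le _ _
      _ ≤ K1 * ‖y - z‖ + K2 * ‖y - z‖ := add_le_add e1 e2
      _ ≤ M * ‖y - z‖ := by nlinarith [norm_nonneg (y - z)]
  set C : ℝ := ‖fderiv ℝ (gradient g) xb‖ + 1 with hC
  have hHb : ∀ᶠ j in atTop, ‖fderiv ℝ (gradient g) (x (s j))‖ < C := by
    have h1 : Tendsto (fun j => ‖fderiv ℝ (gradient g) (x (s j))‖) atTop
        (𝓝 ‖fderiv ℝ (gradient g) xb‖) := ((hHc.norm).tendsto xb).comp hxs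
    exact h1.eventually (p := fun v => v < C)
      (Filter.Tendsto.eventually_lt_const (lt_add_one _) tendsto_id)
  have h1σ : (0:ℝ) < 1 - σ := by linarith
  set c : ℝ := min tmin (β * ((1 - σ) * ζ / M)) with hc
  have hc0 : 0 < c := lt_min htmin (by positivity)
  have hcβ : c ≤ β * ((1 - σ) * ζ / M) := min_le_right _ _
  have hτlow : ∀ᶠ j in atTop, c ≤ τ (s j) := by
    have hxball : ∀ᶠ j in atTop, x (s j) ∈ Metric.ball xb (r / 2) :=
      hxs (Metric.ball_mem_nhds xb (by positivity))
    have hsmall : ∀ᶠ j in atTop, τ (s j) * ‖d (s j)‖ ^ 2 < β ^ 2 * (r / 2) ^ 2 / tmin :=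
      (hTd.comp hs.tendsto_atTop).eventually_lt_const (by positivity)
    filter_upwards [hxball, hsmall] with j hball hsm
    rcases hbt (s j) with hcase | hcase
    · exact le_trans (min_le_left _ _) hcase
    · by_contra hlt
      push_neg at hlt
      set k := s j with hk
      set t : ℝ := τ k / β with ht
      have ht0 : 0 < t := div_pos (hτpos k) hβ0
      have hτtmin : τ k < tmin := lt_of_lt_of_le hlt (min_le_left _ _)
      have hβ2 : (0:ℝ) < β ^ 2 := by positivity
      have htd : t * ‖d k‖ ≤ r / 2 := by
        have h1 : (t * ‖d k‖) ^ 2 < (r / 2) ^ 2 := by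
          have e : (t * ‖d k‖) ^ 2 = (τ k / β ^ 2) * (τ k * ‖d k‖ ^ 2) := by
            rw [ht]; ring
          rw [e]
          have hP : 0 ≤ τ k * ‖d k‖ ^ 2 := le_of_lt (mul_pos (hτpos k) (pow_pos (hdpos k) 2))
          have e2 : (tmin / β ^ 2) * (β ^ 2 * (r / 2) ^ 2 / tmin) = (r / 2) ^ 2 := by
            field_simp
          calc (τ k / β ^ 2) * (τ k * ‖d k‖ ^ 2)
              ≤ (tmin / β ^ 2) * (τ k * ‖d k‖ ^ 2) := by
                apply mul_le_mul_of_nonneg_right _ hP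
                gcongr
            _ < (tmin / β ^ 2) * (β ^ 2 * (r / 2) ^ 2 / tmin) := by
                exact mul_lt_mul_of_pos_left hsm (by positivity)
            _ = (r / 2) ^ 2 := e2
        nlinarith [mul_nonneg ht0.le (norm_nonneg (d k)), hr0]
      have hxk : ‖x k - xb‖ < r / 2 := by
        simpa [dist_eq_norm] using hball
      -- the closed ball around x k of radius t‖d k‖ sits inside closedBall xb r
      set B := Metric.closedBall (x k) (t * ‖d k‖) with hB
      have hBsub : B ⊆ Metric.closedBall xb r := by
        intro z hz
        rw [Metric.mem_closedBall] at hz ⊢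
        calc dist z xb ≤ dist z (x k) + dist (x k) xb := dist_triangle _ _ _
          _ ≤ t * ‖d k‖ + r / 2 := by
              rw [dist_eq_norm, dist_eq_norm]
              rw [dist_eq_norm] at hz
              exact add_le_add hz hxk.le
          _ ≤ r := by linarith
      set w : E := gradient φ (x k) with hw
      set F : E → ℝ := fun z => φ z - (innerSL ℝ w) z with hF
      have hFdiff : ∀ z : E, DifferentiableAt ℝ F z := fun z =>
        (hφd z).sub ((innerSL ℝ w).differentiableAt)
      have hFder : ∀ z : E, fderiv ℝ F z =
          InnerProductSpace.toDual ℝ E (gradient φ z - w) := by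
        intro z
        rw [hF]
        rw [fderiv_fun_sub (hφd z) ((innerSL ℝ w).differentiableAt),
          (innerSL ℝ w).fderiv, hfdφ z, map_sub]
        ext u
        simp [InnerProductSpace.toDual_apply_apply]
      have hFbound : ∀ z ∈ B, ‖fderiv ℝ F z‖ ≤ M * (t * ‖d k‖) := by
        intro z hz
        rw [hFder z, LinearIsometryEquiv.norm_map]
        have := hLip z (hBsub hz) (x k)
          (hBsub (Metric.mem_closedBall_self (by positivity)))
        refine this.trans ?_
        have hzx : ‖z - x k‖ ≤ t * ‖d k‖ := by
          rw [← dist_eq_norm]; exact Metric.mem_closedBall.mp hz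
        exact mul_le_mul_of_nonneg_left hzx hM0.le
      have hmvt : ‖F (x k + t • d k) - F (x k)‖ ≤
          (M * (t * ‖d k‖)) * ‖(x k + t • d k) - x k‖ :=
        (convex_closedBall _ _).norm_image_sub_le_of_norm_fderiv_le
          (fun z _ => hFdiff z) hFbound
          (Metric.mem_closedBall_self (by positivity)) (by
            rw [Metric.mem_closedBall, dist_eq_norm, add_sub_cancel_left, norm_smul,
              Real.norm_eq_abs, abs_of_pos ht0])
      have hnorm : ‖(x k + t • d k) - x k‖ = t * ‖d k‖ := by
        rw [add_sub_cancel_left, norm_smul, Real.norm_eq_abs, abs_of_pos ht0]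
      have hFdiffval : F (x k + t • d k) - F (x k) =
          φ (x k + t • d k) - φ (x k) - t * ⟪w, d k⟫ := by
        simp only [hF, innerSL_apply_apply]
        simp [inner_add_right, real_inner_smul_right]
        ring
      have hub2 : φ (x k + t • d k) - φ (x k) - t * ⟪w, d k⟫ ≤ M * (t * ‖d k‖) * (t * ‖d k‖) := by
        rw [← hFdiffval]
        calc F (x k + t • d k) - F (x k) ≤ ‖F (x k + t • d k) - F (x k)‖ := le_abs_self _
          _ ≤ M * (t * ‖d k‖) * (t * ‖d k‖) := by rw [hnorm] at hmvt; exact hmvt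
      have hcase' : φ (x k) + σ * t * ⟪w, d k⟫ < φ (x k + t • d k) := by
        rw [ht]; exact hcase
      have hwd : ⟪w, d k⟫ ≤ -ζ * ‖d k‖ ^ 2 := hdesc k
      have h5 : ((1 - σ) * ζ) * (t * ‖d k‖ ^ 2) < (M * t) * (t * ‖d k‖ ^ 2) := by
        nlinarith [mul_le_mul_of_nonneg_left hwd
          (by positivity : (0:ℝ) ≤ (1 - σ) * t)]
      have h6 : (1 - σ) * ζ < M * t :=
        lt_of_mul_lt_mul_right h5 (mul_pos ht0 (pow_pos (hdpos k) 2)).le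
      have h7 : τ k = β * t := by rw [ht]; field_simp
      have h8 : β * t < β * ((1 - σ) * ζ / M) := by rw [← h7]; exact lt_of_lt_of_le hlt hcβ
      have h9 : t < (1 - σ) * ζ / M := lt_of_mul_lt_mul_left h8 hβ0.le
      have h10 : M * t < (1 - σ) * ζ := by
        rw [lt_div_iff₀ hM0] at h9; linarith
      linarith
  -- d (s j) → 0
  have h2 : Tendsto (fun j => τ (s j) * ‖d (s j)‖ ^ 2) atTop (𝓝 0) := hTd.comp hs.tendsto_atTop
  have hsq : Tendsto (fun j => ‖d (s j)‖ ^ 2) atTop (𝓝 0) := by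
    refine squeeze_zero' (Eventually.of_forall fun j => sq_nonneg _) ?_
      (by simpa using h2.div_const c)
    filter_upwards [hτlow] with j hj
    rw [le_div_iff₀ hc0]
    nlinarith [sq_nonneg ‖d (s j)‖]
  have hdlim : Tendsto (fun j => ‖d (s j)‖) atTop (𝓝 0) := by
    have e : (fun j => ‖d (s j)‖) = fun j => Real.sqrt (‖d (s j)‖ ^ 2) :=
      funext fun j => (Real.sqrt_sq (norm_nonneg _)).symm
    rw [e]
    have := (Real.continuous_sqrt.tendsto 0).comp hsq
    simpa [Function.comp_def, Real.sqrt_zero] using this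
  have hwlim0 : Tendsto (fun j => gradient φ (x (s j))) atTop (𝓝 0) := by
    rw [tendsto_zero_iff_norm_tendsto_zero]
    refine squeeze_zero' (g := fun j => (C + ρmax) * ‖d (s j)‖)
      (Eventually.of_forall fun j => norm_nonneg _) ?_ ?_
    · filter_upwards [hHb] with j hj
      have hd := hdir (s j)
      have e : gradient φ (x (s j)) =
          -(fderiv ℝ (gradient g) (x (s j)) (d (s j)) + ρ (s j) • d (s j)) := by
        rw [hd, neg_neg]
      rw [e, norm_neg]
      calc ‖fderiv ℝ (gradient g) (x (s j)) (d (s j)) + ρ (s j) • d (s j)‖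
          ≤ ‖fderiv ℝ (gradient g) (x (s j)) (d (s j))‖ + ‖ρ (s j) • d (s j)‖ := norm_add_le _ _
        _ ≤ C * ‖d (s j)‖ + ρmax * ‖d (s j)‖ := by
            refine add_le_add ?_ ?_
            · exact ((fderiv ℝ (gradient g) (x (s j))).le_opNorm (d (s j))).trans
                (mul_le_mul_of_nonneg_right hj.le (norm_nonneg _))
            · rw [norm_smul, Real.norm_eq_abs, abs_of_nonneg (hρk (s j)).1]
              exact mul_le_mul_of_nonneg_right (hρk (s j)).2 (norm_nonneg _)
        _ = (C + ρmax) * ‖d (s j)‖ := by ring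
    · simpa using hdlim.const_mul (C + ρmax)
  have hwlim : Tendsto (fun j => gradient φ (x (s j))) atTop (𝓝 (gradient φ xb)) :=
    (hGφc.tendsto xb).comp hxs
  exact tendsto_nhds_unique hwlim hwlim0
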